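/- arXiv:0802.0017 — 6 statements merged into one kernel-verified Lean document; each statement's English description precedes it below -/
import Mathlib

section
/- Let m ≥ 2 be an integer and let i, j be natural numbers. Then there exists a carry pattern c such that the sum (as polynomials over ℤ) of the base polynomial of i in base m and the base polynomial of j in base m equals the variant polynomial of i+j with carry pattern c in base m. (Paper's Lemma 1: if V₂[0] is aligned with the base polynomial representing V₁[i], then V₂[j] is aligned with one of the polynomials representing V₁[i+j].) -/
/-- A carry pattern: starts at 0, each carry is at most 1, and eventually 0. -/
def IsCarryPattern (c : ℕ → ℕ) : Prop :=
  c 0 = 0 ∧ (∀ k, c k ≤ 1) ∧ ∃ K, ∀ k ≥ K, c k = 0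

/-- `P` is the base polynomial of `n` in base `m`: its `k`-th coefficient is the
`k`-th digit of `n` in base `m`. -/
def IsBasePoly (m n : ℕ) (P : Polynomial ℤ) : Prop :=
  ∀ k, P.coeff k = ((n / m ^ k % m : ℕ) : ℤ)

/-- `P` is the variant polynomial of `n` with carry pattern `c` in base `m`: its
`k`-th coefficient is `d_k + m * c (k+1) - c k` where `d_k` is the `k`-th digit
of `n` in base `m`. -/
def IsVariantPoly (m n : ℕ) (c : ℕ → ℕ) (P : Polynomial ℤ) : Prop :=
  ∀ k, P.coeff k = ((n / m ^ k % m : ℕ) : ℤ) + (m : ℤ) * c (k + 1) - c k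

/-- decomposition of `n % (M*m)` into digit and lower part -/
lemma mod_mul_decomp (n M m : ℕ) (hM : 0 < M) :
    n % (M * m) = M * (n / M % m) + n % M := by
  conv_lhs => rw [← Nat.div_add_mod (n % (M * m)) M]
  rw [Nat.mod_mul_right_div_self, Nat.mod_mod_of_dvd _ ⟨m, rfl⟩]

/-- Paper's Lemma 1: the sum of the base polynomials of `i` and `j` in base `m`
equals the variant polynomial of `i + j` with some carry pattern `c`. -/
theorem basePoly_add_eq_variantPoly (m : ℕ) (hm : 2 ≤ m) (i j : ℕ) :
    ∃ c : ℕ → ℕ, IsCarryPattern c ∧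
      ∀ P Q R : Polynomial ℤ, IsBasePoly m i P → IsBasePoly m j Q →
        IsVariantPoly m (i + j) c R → P + Q = R := by
  have hm0 : 0 < m := by omega
  refine ⟨fun k => (i % m ^ k + j % m ^ k) / m ^ k, ⟨by simp [Nat.mod_one], ?_, ?_⟩, ?_⟩
  · intro k
    show (i % m ^ k + j % m ^ k) / m ^ k ≤ 1
    have hpos : 0 < m ^ k := Nat.pow_pos hm0
    have h2 : i % m ^ k + j % m ^ k < m ^ k * 2 := by
      have := Nat.mod_lt i hpos
      have := Nat.mod_lt j hpos
      omega
    have := Nat.div_lt_of_lt_mul h2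
    omega
  · refine ⟨i + j + 1, fun k hk => ?_⟩
    have h1 : i + j < m ^ k := by
      calc i + j < m ^ (i + j + 1) := by
            have := (Nat.lt_pow_self (show 1 < m by omega) : i + j + 1 < m ^ (i + j + 1))
            omega
        _ ≤ m ^ k := Nat.pow_le_pow_right hm0 hk
    show (i % m ^ k + j % m ^ k) / m ^ k = 0
    rw [Nat.mod_eq_of_lt (by omega), Nat.mod_eq_of_lt (by omega)]
    exact Nat.div_eq_of_lt h1
  · intro P Q R hP hQ hR
    ext k
    rw [Polynomial.coeff_add, hP k, hQ k, hR k]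
    -- key nat identity
    set M := m ^ k with hMdef
    have hM : 0 < M := Nat.pow_pos hm0
    have key : i / M % m + j / M % m + (i % M + j % M) / M
        = (i + j) / M % m + m * ((i % m ^ (k+1) + j % m ^ (k+1)) / m ^ (k+1)) := by
      have hM' : m ^ (k + 1) = M * m := by rw [hMdef, pow_succ]
      have hi : i % (M * m) = M * (i / M % m) + i % M := mod_mul_decomp i M m hM
      have hj : j % (M * m) = M * (j / M % m) + j % M := mod_mul_decomp j M m hM
      have hs : (i + j) % (M * m) = M * ((i + j) / M % m) + (i + j) % M :=
        mod_mul_decomp (i + j) M m hM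
      -- carries
      have c1 : i % M + j % M = (i + j) % M + M * ((i % M + j % M) / M) := by
        conv_lhs => rw [← Nat.div_add_mod (i % M + j % M) M]
        rw [Nat.add_mod i j]; ring
      have c2 : i % (M * m) + j % (M * m)
          = (i + j) % (M * m) + (M * m) * ((i % (M * m) + j % (M * m)) / (M * m)) := by
        conv_lhs => rw [← Nat.div_add_mod (i % (M * m) + j % (M * m)) (M * m)]
        rw [Nat.add_mod i j]; ring
      rw [hM']
      have := c2
      rw [hi, hj, hs] at this
      -- this : M*di + i%M + (M*dj + j%M) = M*ds + (i+j)%M + (M*m)*c'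
      -- combine with c1 and cancel M
      have hmain : M * (i / M % m) + M * (j / M % m) + M * ((i % M + j % M) / M)
          = M * ((i + j) / M % m) + M * (m * ((i % (M*m) + j % (M*m)) / (M*m))) := by
        have := c1
        nlinarith [this]
      have := Nat.eq_of_mul_eq_mul_left hM (by linarith [hmain] : M * (i / M % m + j / M % m + (i % M + j % M) / M) = M * ((i + j) / M % m + m * ((i % (M*m) + j % (M*m)) / (M*m))))
      exact this
    have keyZ := congrArg (Nat.cast : ℕ → ℤ) key
    rw [Nat.cast_add, Nat.cast_add, Nat.cast_add, Nat.cast_mul] at keyZ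
    linarith [keyZ]
end

section
/- Let m ≥ 2 be an integer. The map sending a pair (n, c), where n is a natural number and c is a carry pattern, to the variant polynomial of n with carry pattern c in base m, is injective: if the variant polynomial of n with pattern c equals the variant polynomial of n' with pattern c', then n = n' and c = c'. (Paper's claim that all the 2^c × n₁ created polynomials are unique.) -/
lemma eq_of_digits_eq (m : ℕ) (hm : 2 ≤ m) :
    ∀ N n n', n + n' ≤ N → (∀ k, n / m ^ k % m = n' / m ^ k % m) → n = n' := by
  intro N
  induction N with
  | zero => intro n n' hle _; omega
  | succ N ih =>
    intro n n' hle h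
    rcases Nat.eq_zero_or_pos (n + n') with h0 | hp
    · omega
    · have h0' : n % m = n' % m := by simpa using h 0
      have key : n / m = n' / m := by
        apply ih
        · have h1 : n / m ≤ n := Nat.div_le_self _ _
          have h2 : n' / m ≤ n' := Nat.div_le_self _ _
          rcases Nat.eq_zero_or_pos n with hn | hn
          · have : n' / m < n' := Nat.div_lt_self (by omega) (by omega)
            omega
          · have : n / m < n := Nat.div_lt_self hn (by omega)
            omega
        · intro k
          have := h (k + 1)
          have e1 : n / m ^ (k + 1) = n / m / m ^ k := by
            rw [Nat.div_div_eq_div_mul, pow_succ, mul_comm]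
          have e2 : n' / m ^ (k + 1) = n' / m / m ^ k := by
            rw [Nat.div_div_eq_div_mul, pow_succ, mul_comm]
          rw [e1, e2] at this
          exact this
      have hn := Nat.div_add_mod n m
      have hn' := Nat.div_add_mod n' m
      rw [key, h0'] at hn
      omega

/-- The map `(n, c) ↦` variant polynomial of `n` with carry pattern `c` in base `m`
is injective: all the created polynomials are unique. -/
theorem variantPoly_injective (m : ℕ) (hm : 2 ≤ m) (n n' : ℕ) (c c' : ℕ → ℕ)
    (hc : IsCarryPattern c) (hc' : IsCarryPattern c')
    (R R' : Polynomial ℤ) (hR : IsVariantPoly m n c R) (hR' : IsVariantPoly m n' c' R')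
    (h : R = R') : n = n' ∧ c = c' := by
  obtain ⟨hc0, hc1, _⟩ := hc
  obtain ⟨hc0', hc1', _⟩ := hc'
  have heq : ∀ k, ((n / m ^ k % m : ℕ) : ℤ) + (m : ℤ) * c (k + 1) - c k
      = ((n' / m ^ k % m : ℕ) : ℤ) + (m : ℤ) * c' (k + 1) - c' k := by
    intro k
    rw [← hR k, ← hR' k, h]
  have hmpos : 0 < m := by omega
  -- First: the carries agree, by induction.
  have hcc : ∀ k, c k = c' k := by
    intro k
    induction k with
    | zero => rw [hc0, hc0']
    | succ k ih =>
      have e := heq k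
      rw [ih] at e
      have hd : n / m ^ k % m < m := Nat.mod_lt _ hmpos
      have hd' : n' / m ^ k % m < m := Nat.mod_lt _ hmpos
      have ha := hc1 (k + 1)
      have hb := hc1' (k + 1)
      set a := c (k + 1) with haa
      set b := c' (k + 1) with hbb
      clear_value a b
      interval_cases a <;> interval_cases b <;>
        simp only [Nat.cast_zero, Nat.cast_one] at e <;> omega
  -- Then the digits agree.
  have hdd : ∀ k, n / m ^ k % m = n' / m ^ k % m := by
    intro k
    have e := heq k
    rw [hcc k, hcc (k + 1)] at e
    omega
  exact ⟨eq_of_digits_eq m hm (n + n') n n' le_rfl hdd, funext hcc⟩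
end

section
/- Let q be a prime, let S be a finite set of polynomials over the field 𝔽_q = ZMod q, each of degree at most c, and let P ∈ S. Then the number of elements x ∈ 𝔽_q at which P appears as a singleton (i.e., R(x) ≠ P(x) for every R ∈ S with R ≠ P) is at least q − c · (|S| − 1). In particular, if q ≥ 2c·(|S| − 1), then P appears as a singleton for at least half of the q assignments. -/
/-- Given a finite set `S` of polynomials over `𝔽_q`, each of degree at most `c`,
and `P ∈ S`, the number of assignments `x ∈ 𝔽_q` at which `P` appears as a
singleton is at least `q - c * (|S| - 1)`; in particular if `q ≥ 2c(|S| - 1)`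
then `P` appears as a singleton for at least half of the `q` assignments. -/
theorem singleton_assignments_bound (q : ℕ) (hq : q.Prime) (c : ℕ)
    (S : Finset (Polynomial (ZMod q))) (hdeg : ∀ R ∈ S, R.natDegree ≤ c)
    (P : Polynomial (ZMod q)) (hP : P ∈ S) :
    q - c * (S.card - 1) ≤
      {x : ZMod q | ∀ R ∈ S, R ≠ P → R.eval x ≠ P.eval x}.ncard ∧
    (2 * c * (S.card - 1) ≤ q →
      q ≤ 2 * {x : ZMod q | ∀ R ∈ S, R ≠ P → R.eval x ≠ P.eval x}.ncard) := by
  haveI : Fact q.Prime := ⟨hq⟩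
  set good : Finset (ZMod q) :=
    Finset.univ.filter (fun x => ∀ R ∈ S, R ≠ P → R.eval x ≠ P.eval x) with hgood
  have hset : {x : ZMod q | ∀ R ∈ S, R ≠ P → R.eval x ≠ P.eval x} = ↑good := by
    ext x; simp [hgood]
  rw [hset, Set.ncard_coe_finset]
  have hbadsub : Finset.univ \ good ⊆
      (S.erase P).biUnion (fun R => (R - P).roots.toFinset) := by
    intro x hx
    simp only [Finset.mem_sdiff, Finset.mem_univ, true_and, hgood,
      Finset.mem_filter, not_and, not_forall] at hx
    obtain ⟨R, hR, hRP, hx⟩ := hx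
    simp only [Finset.mem_biUnion, Multiset.mem_toFinset]
    refine ⟨R, Finset.mem_erase.2 ⟨hRP, hR⟩, ?_⟩
    rw [Polynomial.mem_roots (sub_ne_zero.2 hRP)]
    simp [Polynomial.IsRoot, sub_eq_zero, not_not.1 hx]
  have hbadcard : (Finset.univ \ good).card ≤ c * (S.card - 1) := by
    calc (Finset.univ \ good).card
        ≤ ((S.erase P).biUnion (fun R => (R - P).roots.toFinset)).card :=
          Finset.card_le_card hbadsub
      _ ≤ ∑ R ∈ S.erase P, ((R - P).roots.toFinset).card :=
          Finset.card_biUnion_le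
      _ ≤ ∑ R ∈ S.erase P, c := by
          apply Finset.sum_le_sum
          intro R hR
          calc ((R - P).roots.toFinset).card ≤ Multiset.card (R - P).roots :=
                Multiset.toFinset_card_le _
            _ ≤ (R - P).natDegree := Polynomial.card_roots' _
            _ ≤ max R.natDegree P.natDegree := Polynomial.natDegree_sub_le _ _
            _ ≤ c := max_le (hdeg R (Finset.mem_of_mem_erase hR)) (hdeg P hP)
      _ = c * (S.card - 1) := by
          rw [Finset.sum_const, smul_eq_mul, Finset.card_erase_of_mem hP, mul_comm]
  have hq0 : Fintype.card (ZMod q) = q := ZMod.card q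
  have huniv : (Finset.univ : Finset (ZMod q)).card = q := by
    rw [Finset.card_univ, hq0]
  have hgoodge : q - c * (S.card - 1) ≤ good.card := by
    have := Finset.card_sdiff_add_card_eq_card (Finset.subset_univ good)
    omega
  refine ⟨hgoodge, fun h => ?_⟩
  rw [mul_assoc] at h
  have := Finset.card_sdiff_add_card_eq_card (Finset.subset_univ good)
  omega
end

section
/- Let R be a nonempty finite set (rows), C a finite set (columns), and M a relation between R and C such that every column j ∈ C satisfies |R| ≤ 2·|{i ∈ R : M i j}|. Then there exists a subset S ⊆ R with |S| ≤ log₂|C| + 1 (e.g., |S| ≤ Nat.log 2 |C| + 1) such that every column j ∈ C is covered by some row in S, i.e., for every j ∈ C there is i ∈ S with M i j. -/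
open Finset in
private lemma cover_aux {R C : Type*} [Fintype R] [Fintype C] [Nonempty R]
    (M : R → C → Prop)
    (hcol : ∀ j : C, Fintype.card R ≤ 2 * {i : R | M i j}.ncard) :
    ∀ n (T : Finset C), T.card ≤ n → ∃ S : Finset R,
      S.card ≤ Nat.log 2 T.card + 1 ∧ ∀ j ∈ T, ∃ i ∈ S, M i j := by
  classical
  have hcol' : ∀ j : C, Fintype.card R ≤ 2 * (univ.filter (fun i => M i j)).card := by
    intro j
    have := hcol j
    rwa [Set.ncard_eq_toFinset_card', Set.toFinset_setOf] at this
  intro n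
  induction n with
  | zero =>
    intro T hT
    refine ⟨∅, by simp, ?_⟩
    rw [Finset.card_eq_zero.mp (Nat.le_zero.mp hT)]
    simp
  | succ n ih =>
    intro T hT
    rcases eq_or_ne T ∅ with rfl | hTne
    · exact ⟨∅, by simp, by simp⟩
    have hTpos : 0 < T.card := Finset.card_pos.mpr (Finset.nonempty_of_ne_empty hTne)
    set f : R → ℕ := fun i => (T.filter (fun j => M i j)).card with hf
    -- double counting
    have hsum : T.card * Fintype.card R ≤ ∑ i : R, 2 * f i := by
      have h1 : ∑ i : R, 2 * f i = 2 * ∑ j ∈ T, (univ.filter (fun i => M i j)).card := by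
        rw [← Finset.mul_sum]
        congr 1
        simp only [hf, Finset.card_filter]
        rw [Finset.sum_comm]
      rw [h1]
      calc T.card * Fintype.card R = ∑ _j ∈ T, Fintype.card R := by
            rw [Finset.sum_const, smul_eq_mul]
        _ ≤ ∑ j ∈ T, 2 * (univ.filter (fun i => M i j)).card :=
            Finset.sum_le_sum (fun j _ => hcol' j)
        _ = 2 * ∑ j ∈ T, (univ.filter (fun i => M i j)).card := by rw [Finset.mul_sum]
    -- pigeonhole: some row covers at least half of T
    have hex : ∃ i : R, T.card ≤ 2 * f i := by
      by_contra h
      push_neg at h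
      have hlt : ∑ i : R, 2 * f i < ∑ _i : R, T.card :=
        Finset.sum_lt_sum_of_nonempty univ_nonempty (fun i _ => h i)
      rw [Finset.sum_const, smul_eq_mul, Finset.card_univ, mul_comm] at hlt
      omega
    obtain ⟨i, hi⟩ := hex
    set T' : Finset C := T.filter (fun j => ¬ M i j) with hT'
    have hcards : f i + T'.card = T.card := Finset.card_filter_add_card_filter_not _
    have hhalf : 2 * T'.card ≤ T.card := by omega
    rcases eq_or_ne T' ∅ with hT'e | hT'ne
    · refine ⟨{i}, by simp, ?_⟩
      intro j hj
      refine ⟨i, Finset.mem_singleton_self i, ?_⟩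
      by_contra hM
      have : j ∈ T' := Finset.mem_filter.mpr ⟨hj, hM⟩
      simp [hT'e] at this
    · have hT'pos : 0 < T'.card := Finset.card_pos.mpr (Finset.nonempty_of_ne_empty hT'ne)
      have hT'le : T'.card ≤ n := by omega
      obtain ⟨S', hS'card, hS'cov⟩ := ih T' hT'le
      refine ⟨insert i S', ?_, ?_⟩
      · have h2 : 2 ≤ T.card := by omega
        have hlogT : 1 ≤ Nat.log 2 T.card := Nat.log_pos (by norm_num) h2
        have hmono : Nat.log 2 T'.card ≤ Nat.log 2 (T.card / 2) :=
          Nat.log_mono_right (Nat.le_div_iff_mul_le (by norm_num) |>.mpr (by omega))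
        have hdiv : Nat.log 2 (T.card / 2) = Nat.log 2 T.card - 1 := Nat.log_div_base 2 T.card
        calc (insert i S').card ≤ S'.card + 1 := Finset.card_insert_le _ _
          _ ≤ Nat.log 2 T'.card + 2 := by omega
          _ ≤ Nat.log 2 T.card + 1 := by omega
      · intro j hj
        by_cases hM : M i j
        · exact ⟨i, Finset.mem_insert_self i S', hM⟩
        · obtain ⟨i', hi', hMi'⟩ := hS'cov j (Finset.mem_filter.mpr ⟨hj, hM⟩)
          exact ⟨i', Finset.mem_insert_of_mem hi', hMi'⟩

/-- Recursive halving: if a 0-1 table with nonempty finite row set `R` and finite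
column set `C` is at least half full in every column, then there is a set `S` of
at most `log₂ |C| + 1` rows covering every column. -/
theorem exists_small_covering_row_set (R C : Type*) [Fintype R] [Fintype C]
    [Nonempty R] (M : R → C → Prop)
    (hcol : ∀ j : C, Fintype.card R ≤ 2 * {i : R | M i j}.ncard) :
    ∃ S : Finset R, S.card ≤ Nat.log 2 (Fintype.card C) + 1 ∧
      ∀ j : C, ∃ i ∈ S, M i j := by
  classical
  obtain ⟨S, hcard, hcov⟩ := cover_aux M hcol (Fintype.card C) Finset.univ
    (le_of_eq (Finset.card_univ))
  exact ⟨S, by simpa [Finset.card_univ] using hcard,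
    fun j => hcov j (Finset.mem_univ j)⟩
end

section
/- Let q be a prime and let S be a finite set of polynomials over the field 𝔽_q = ZMod q, each of degree at most c, with q ≥ 2c·|S| and S nonempty. Then there exists a set A ⊆ 𝔽_q of assignments with |A| ≤ log₂|S| + 1 (e.g., |A| ≤ Nat.log 2 |S| + 1) such that every polynomial P ∈ S appears as a singleton at some a ∈ A: for each P ∈ S there is a ∈ A with R(a) ≠ P(a) for all R ∈ S, R ≠ P. (Main result of the paper's length-reduction technique: O(log n₁) assignments suffice so that each polynomial appears as a singleton at least once.) -/
/-- Main result of the length-reduction technique: for a nonempty finite set `S`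
of polynomials over `𝔽_q` of degree at most `c`, with `q ≥ 2c|S|`, there is a set
`A` of at most `log₂ |S| + 1` assignments such that every polynomial of `S`
appears as a singleton at some assignment of `A`. -/
theorem exists_singleton_assignments (q : ℕ) (hq : q.Prime) (c : ℕ)
    (S : Finset (Polynomial (ZMod q))) (hS : S.Nonempty)
    (hdeg : ∀ R ∈ S, R.natDegree ≤ c) (hq2 : 2 * c * S.card ≤ q) :
    ∃ A : Finset (ZMod q), A.card ≤ Nat.log 2 S.card + 1 ∧
      ∀ P ∈ S, ∃ a ∈ A, ∀ R ∈ S, R ≠ P → R.eval a ≠ P.eval a := by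
  haveI := Fact.mk hq
  have hq0 : 0 < q := hq.pos
  -- agreement set of two distinct polynomials of degree ≤ c has size ≤ c
  have key : ∀ P ∈ S, ∀ R ∈ S, R ≠ P →
      (Finset.univ.filter (fun a : ZMod q => R.eval a = P.eval a)).card ≤ c := by
    intro P hP R hR hne
    have hRP : R - P ≠ 0 := sub_ne_zero.mpr hne
    have hsub : Finset.univ.filter (fun a : ZMod q => R.eval a = P.eval a)
        ⊆ (R - P).roots.toFinset := by
      intro a ha
      simp only [Finset.mem_filter, Finset.mem_univ, true_and] at ha
      rw [Multiset.mem_toFinset, Polynomial.mem_roots hRP]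
      simp [Polynomial.IsRoot, ha]
    calc (Finset.univ.filter (fun a : ZMod q => R.eval a = P.eval a)).card
        ≤ (R - P).roots.toFinset.card := Finset.card_le_card hsub
      _ ≤ Multiset.card (R - P).roots := Multiset.toFinset_card_le _
      _ ≤ (R - P).natDegree := Polynomial.card_roots' _
      _ ≤ max R.natDegree P.natDegree := Polynomial.natDegree_sub_le _ _
      _ ≤ c := max_le (hdeg R hR) (hdeg P hP)
  -- halving step
  have step : ∀ T : Finset (Polynomial (ZMod q)), T ⊆ S → ∃ a : ZMod q,
      2 * (T.filter (fun P => ∃ R ∈ S, R ≠ P ∧ R.eval a = P.eval a)).card ≤ T.card := by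
    intro T hT
    by_contra h
    push_neg at h
    have hsum : ∑ a : ZMod q,
        (T.filter (fun P => ∃ R ∈ S, R ≠ P ∧ R.eval a = P.eval a)).card
        ≤ c * S.card * T.card := by
      have swap : ∑ a : ZMod q,
          (T.filter (fun P => ∃ R ∈ S, R ≠ P ∧ R.eval a = P.eval a)).card
          = ∑ P ∈ T, (Finset.univ.filter
              (fun a : ZMod q => ∃ R ∈ S, R ≠ P ∧ R.eval a = P.eval a)).card := by
        simp only [Finset.card_filter]
        rw [Finset.sum_comm]
      rw [swap]
      have inner : ∀ P ∈ T, (Finset.univ.filter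
          (fun a : ZMod q => ∃ R ∈ S, R ≠ P ∧ R.eval a = P.eval a)).card ≤ c * S.card := by
        intro P hP
        have hsub : (Finset.univ.filter
            (fun a : ZMod q => ∃ R ∈ S, R ≠ P ∧ R.eval a = P.eval a))
            ⊆ (S.erase P).biUnion
              (fun R => Finset.univ.filter (fun a : ZMod q => R.eval a = P.eval a)) := by
          intro a ha
          simp only [Finset.mem_filter, Finset.mem_univ, true_and] at ha
          obtain ⟨R, hR, hRne, hev⟩ := ha
          simp only [Finset.mem_biUnion, Finset.mem_filter, Finset.mem_univ, true_and,
            Finset.mem_erase]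
          exact ⟨R, ⟨hRne, hR⟩, hev⟩
        calc (Finset.univ.filter
            (fun a : ZMod q => ∃ R ∈ S, R ≠ P ∧ R.eval a = P.eval a)).card
            ≤ ∑ R ∈ S.erase P,
                (Finset.univ.filter (fun a : ZMod q => R.eval a = P.eval a)).card :=
              le_trans (Finset.card_le_card hsub) (Finset.card_biUnion_le)
          _ ≤ ∑ _R ∈ S.erase P, c := by
              apply Finset.sum_le_sum
              intro R hR
              exact key P (hT hP) R (Finset.mem_of_mem_erase hR) (Finset.ne_of_mem_erase hR)
          _ = c * (S.erase P).card := by rw [Finset.sum_const, smul_eq_mul, mul_comm]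
          _ ≤ c * S.card := Nat.mul_le_mul_left c (Finset.card_le_card (Finset.erase_subset _ _))
      calc ∑ P ∈ T, (Finset.univ.filter
          (fun a : ZMod q => ∃ R ∈ S, R ≠ P ∧ R.eval a = P.eval a)).card
          ≤ ∑ _P ∈ T, c * S.card := Finset.sum_le_sum inner
        _ = c * S.card * T.card := by rw [Finset.sum_const, smul_eq_mul, mul_comm]
    have hlow : q * (T.card + 1) ≤ ∑ a : ZMod q,
        2 * (T.filter (fun P => ∃ R ∈ S, R ≠ P ∧ R.eval a = P.eval a)).card := by
      have : q * (T.card + 1) = ∑ _a : ZMod q, (T.card + 1) := by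
        rw [Finset.sum_const, smul_eq_mul, Finset.card_univ, ZMod.card]
      rw [this]
      exact Finset.sum_le_sum fun a _ => h a
    rw [← Finset.mul_sum] at hlow
    have : q * (T.card + 1) ≤ q * T.card := by
      calc q * (T.card + 1) ≤ 2 * (c * S.card * T.card) := le_trans hlow (by omega)
        _ = (2 * c * S.card) * T.card := by ring
        _ ≤ q * T.card := Nat.mul_le_mul_right _ hq2
    have := Nat.le_of_mul_le_mul_left this hq0
    omega
  -- main induction
  have main : ∀ n : ℕ, ∀ T : Finset (Polynomial (ZMod q)), T ⊆ S → T.card ≤ n →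
      ∃ A : Finset (ZMod q),
        A.card ≤ (if T.card = 0 then 0 else Nat.log 2 T.card + 1) ∧
        ∀ P ∈ T, ∃ a ∈ A, ∀ R ∈ S, R ≠ P → R.eval a ≠ P.eval a := by
    intro n
    induction n with
    | zero =>
      intro T hT hc
      have : T = ∅ := Finset.card_eq_zero.mp (Nat.le_zero.mp hc)
      subst this
      exact ⟨∅, by simp, by simp⟩
    | succ n ih =>
      intro T hT hc
      by_cases hT0 : T.card = 0
      · have : T = ∅ := Finset.card_eq_zero.mp hT0
        subst this
        exact ⟨∅, by simp, by simp⟩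
      · obtain ⟨a, ha⟩ := step T hT
        set T' := T.filter (fun P => ∃ R ∈ S, R ≠ P ∧ R.eval a = P.eval a) with hT'def
        have hT'sub : T' ⊆ T := Finset.filter_subset _ _
        have hT'card : T'.card ≤ T.card / 2 := Nat.le_div_iff_mul_le (by norm_num) |>.mpr
          (by omega)
        obtain ⟨A, hAcard, hAprop⟩ := ih T' (hT'sub.trans hT)
          (by
            have h1 : T.card / 2 < T.card := Nat.div_lt_self (Nat.pos_of_ne_zero hT0) one_lt_two
            omega)
        refine ⟨insert a A, ?_, ?_⟩
        · have hins : (insert a A).card ≤ A.card + 1 := Finset.card_insert_le _ _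
          have hA2 : A.card ≤ Nat.log 2 T.card := by
            by_cases hT'0 : T'.card = 0
            · simp only [hT'0, if_pos] at hAcard
              omega
            · simp only [hT'0, if_neg, if_false] at hAcard
              have h2 : 2 ≤ T.card := by
                have : 1 ≤ T.card / 2 := by omega
                omega
              have hlog : Nat.log 2 T'.card ≤ Nat.log 2 (T.card / 2) :=
                Nat.log_mono_right hT'card
              have hdiv : Nat.log 2 (T.card / 2) = Nat.log 2 T.card - 1 :=
                Nat.log_div_base 2 T.card
              have hpos : 0 < Nat.log 2 T.card := Nat.log_pos one_lt_two h2
              omega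
          simp only [hT0, if_neg, if_false]
          omega
        · intro P hP
          by_cases hPT' : P ∈ T'
          · obtain ⟨a', ha'A, ha'⟩ := hAprop P hPT'
            exact ⟨a', Finset.mem_insert_of_mem ha'A, ha'⟩
          · refine ⟨a, Finset.mem_insert_self _ _, ?_⟩
            intro R hR hRP
            simp only [hT'def, Finset.mem_filter, hP, true_and, not_exists] at hPT'
            intro heq
            exact (hPT' R) ⟨hR, hRP, heq⟩
  obtain ⟨A, hA, hprop⟩ := main S.card S subset_rfl le_rfl
  refine ⟨A, ?_, hprop⟩
  have : S.card ≠ 0 := Finset.card_ne_zero_of_mem hS.choose_spec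
  simpa [this] using hA
end

section
/- Let T be a finite set of natural numbers with |T| = n, all of whose elements are smaller than 2^b for some b ≥ 1, and let P be a finite set of primes with |P| > (n·(n−1)/2) · b. Then there exists a prime p ∈ P such that reduction modulo p is injective on T: for all x, y ∈ T, if x ≡ y (mod p) then x = y. (The paper's guarantee that testing enough primes yields one producing a vector with no multiples, i.e., all non-zeros appear as singletons.) -/
lemma primeFactors_card_le (d b : ℕ) (hd : d ≠ 0) (h : d < 2 ^ b) :
    d.primeFactors.card ≤ b := by
  by_contra hc
  push_neg at hc
  have h1 : 2 ^ d.primeFactors.card ≤ ∏ p ∈ d.primeFactors, p :=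
    Finset.pow_card_le_prod _ _ _ (fun p hp => (Nat.prime_of_mem_primeFactors hp).two_le)
  have h2 : ∏ p ∈ d.primeFactors, p ≤ d :=
    Nat.le_of_dvd (Nat.pos_of_ne_zero hd) (Nat.prod_primeFactors_dvd d)
  have h3 : (2:ℕ) ^ d.primeFactors.card < 2 ^ b := lt_of_le_of_lt (h1.trans h2) h
  exact absurd ((Nat.pow_lt_pow_iff_right one_lt_two).mp h3) (not_lt.mpr hc.le)

/-- If `T` has `n` elements, all smaller than `2^b` (with `b ≥ 1`), and `P` is a set
of more than `(n(n-1)/2) * b` primes, then some prime `p ∈ P` produces only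
singletons: reduction modulo `p` is injective on `T`. -/
theorem exists_prime_injective_mod (T : Finset ℕ) (n b : ℕ) (hn : T.card = n)
    (hb : 1 ≤ b) (hT : ∀ x ∈ T, x < 2 ^ b)
    (P : Finset ℕ) (hP : ∀ p ∈ P, p.Prime) (hPcard : n * (n - 1) / 2 * b < P.card) :
    ∃ p ∈ P, ∀ x ∈ T, ∀ y ∈ T, x ≡ y [MOD p] → x = y := by
  by_contra hcon
  push_neg at hcon
  set S : Finset (ℕ × ℕ) := (T ×ˢ T).filter (fun q => q.2 < q.1) with hS
  set S' : Finset (ℕ × ℕ) := (T ×ˢ T).filter (fun q => q.1 < q.2) with hS'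
  -- P is covered by prime factors of differences
  have hsub : P ⊆ S.biUnion (fun q => (q.1 - q.2).primeFactors) := by
    intro p hp
    obtain ⟨x, hx, y, hy, hxy, hne⟩ := hcon p hp
    rcases lt_or_gt_of_ne hne with hlt | hgt
    · refine Finset.mem_biUnion.mpr ⟨(y, x), ?_, ?_⟩
      · simp [hS, Finset.mem_filter, hx, hy, hlt]
      · refine Nat.mem_primeFactors.mpr ⟨hP p hp, (Nat.modEq_iff_dvd' hlt.le).mp hxy, ?_⟩
        omega
    · refine Finset.mem_biUnion.mpr ⟨(x, y), ?_, ?_⟩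
      · simp [hS, Finset.mem_filter, hx, hy, hgt]
      · refine Nat.mem_primeFactors.mpr ⟨hP p hp, (Nat.modEq_iff_dvd' hgt.le).mp hxy.symm, ?_⟩
        omega
  -- card S = card S'
  have hcardeq : S.card = S'.card := by
    apply Finset.card_bij (fun q _ => (q.2, q.1))
    · intro q hq
      simp only [hS, hS', Finset.mem_filter, Finset.mem_product] at hq ⊢
      exact ⟨⟨hq.1.2, hq.1.1⟩, hq.2⟩
    · intro q₁ h₁ q₂ h₂ h
      simpa [Prod.ext_iff, and_comm] using h
    · intro q hq
      simp only [hS, hS', Finset.mem_filter, Finset.mem_product] at hq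
      exact ⟨(q.2, q.1), by simp [hS, Finset.mem_filter, hq.1.1, hq.1.2, hq.2], rfl⟩
  -- S ∪ S' ⊆ offDiag, disjoint
  have hdisj : Disjoint S S' := by
    rw [Finset.disjoint_left]
    intro q hq hq'
    simp only [hS, hS', Finset.mem_filter] at hq hq'
    omega
  have hunion : S ∪ S' ⊆ T.offDiag := by
    intro q hq
    rcases Finset.mem_union.mp hq with h | h <;>
      simp only [hS, hS', Finset.mem_filter, Finset.mem_product] at h <;>
      · refine Finset.mem_offDiag.mpr ⟨h.1.1, h.1.2, ?_⟩
        omega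
  have hSc : S.card * 2 ≤ n * (n - 1) := by
    have h1 : (S ∪ S').card = S.card + S'.card := Finset.card_union_of_disjoint hdisj
    have h2 : (S ∪ S').card ≤ T.offDiag.card := Finset.card_le_card hunion
    have h3 : T.offDiag.card = n * n - n := by rw [Finset.offDiag_card, hn]
    have hnn : n * n - n = n * (n - 1) := by cases n <;> simp [Nat.mul_sub, Nat.succ_sub_one] <;> ring_nf <;> omega
    omega
  have hSc' : S.card ≤ n * (n - 1) / 2 := Nat.le_div_iff_mul_le (by norm_num) |>.mpr hSc
  -- final count
  have hcount : P.card ≤ n * (n - 1) / 2 * b := by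
    calc P.card ≤ (S.biUnion (fun q => (q.1 - q.2).primeFactors)).card := Finset.card_le_card hsub
    _ ≤ ∑ q ∈ S, (q.1 - q.2).primeFactors.card := Finset.card_biUnion_le
    _ ≤ ∑ _q ∈ S, b := by
        apply Finset.sum_le_sum
        intro q hq
        simp only [hS, Finset.mem_filter, Finset.mem_product] at hq
        refine primeFactors_card_le _ _ (by omega) ?_
        have := hT q.1 hq.1.1
        omega
    _ = S.card * b := by rw [Finset.sum_const, smul_eq_mul]
    _ ≤ n * (n - 1) / 2 * b := Nat.mul_le_mul_right _ hSc'
  omega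
end
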